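/- Let σ ⊆ R^N be a non-degenerate d-simplex, H a d-dimensional affine space, and suppose ∠(Aff σ, H) ≤ θ < π/2. Then the projected simplex π_H(σ) is a non-degenerate d-simplex and cos θ · height(σ) ≤ height(π_H σ). -/

import Mathlib

open Metric Set
open scoped Classical

noncomputable section

abbrev Euc (N : ℕ) := EuclideanSpace ℝ (Fin N)

variable {N : ℕ}

/-- The medial axis of `A`: points with at least two closest points in `A`. -/
def medialAxis (A : Set (Euc N)) : Set (Euc N) :=
  {x | ∃ a ∈ A, ∃ b ∈ A, a ≠ b ∧ dist x a = infDist x A ∧ dist x b = infDist x A}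

/-- `p` is a nearest point of `A` to `x`. -/
def IsNearestPt (A : Set (Euc N)) (x p : Euc N) : Prop :=
  p ∈ A ∧ dist x p = infDist x A

/-- `π` is a nearest-point projection map onto `A`, defined off the medial axis. -/
def IsNearestPtProj (A : Set (Euc N)) (π : Euc N → Euc N) : Prop :=
  ∀ x, x ∉ medialAxis A → IsNearestPt A x (π x)

/-- The angle between two linear subspaces: sup over unit vectors of `V₀` of the inf of
angles with unit vectors of `V₁`. -/
def subAngle (V₀ V₁ : Submodule ℝ (Euc N)) : ℝ :=
  sSup {a | ∃ v₀ ∈ V₀, ‖v₀‖ = 1 ∧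
    a = sInf {b | ∃ v₁ ∈ V₁, ‖v₁‖ = 1 ∧ b = InnerProductGeometry.angle v₀ v₁}}

/-- Angle between two affine subspaces. -/
def affAngle (H₀ H₁ : AffineSubspace ℝ (Euc N)) : ℝ :=
  subAngle H₀.direction H₁.direction

/-- Angle between the line through `u, v` and the affine subspace `H`. -/
def lineAngle (u v : Euc N) (H : AffineSubspace ℝ (Euc N)) : ℝ :=
  subAngle (Submodule.span ℝ {v - u}) H.direction

/-- Orthogonal projection onto an affine subspace (the identity if `H` is empty). -/
def projA (H : AffineSubspace ℝ (Euc N)) (x : Euc N) : Euc N :=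
  if h : (H : Set (Euc N)).Nonempty then
    h.choose + (H.direction.orthogonalProjection (x - h.choose) : Euc N)
  else x

/-- The minimal height of a simplex (over all vertices, distance to opposite facet). -/
def height (σ : Finset (Euc N)) : ℝ :=
  sInf ((fun v => infDist v (affineSpan ℝ ((σ.erase v : Finset (Euc N)) : Set (Euc N)))) '' σ)

/-- `σ` is a non-degenerate simplex: its vertices are affinely independent. -/
def Nondegenerate (σ : Finset (Euc N)) : Prop :=
  AffineIndependent ℝ (fun p : σ => (p : Euc N))

/-- The sphere centered at `z` of radius `r` circumscribes `σ`. -/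
def IsCircum (σ : Finset (Euc N)) (z : Euc N) (r : ℝ) : Prop :=
  ∀ p ∈ σ, dist p z = r

/-- `(z, r)` is the smallest circumscribing sphere of `σ`. -/
def IsMinCircum (σ : Finset (Euc N)) (z : Euc N) (r : ℝ) : Prop :=
  IsCircum σ z r ∧ ∀ z' r', IsCircum σ z' r' → r ≤ r'

/-- `(c, r)` is the smallest enclosing ball of `σ`. -/
def IsSEB (σ : Finset (Euc N)) (c : Euc N) (r : ℝ) : Prop :=
  (∀ p ∈ σ, dist p c ≤ r) ∧ ∀ c' r', (∀ p ∈ σ, dist p c' ≤ r') → r ≤ r'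

/-- `σ` is a Delaunay simplex of the point set `Q`: some circumscribing sphere of `σ`
bounds a ball containing no point of `Q` in its interior. -/
def IsDelaunay (Q : Set (Euc N)) (σ : Finset (Euc N)) : Prop :=
  (σ : Set (Euc N)) ⊆ Q ∧ ∃ z r, IsCircum σ z r ∧ ∀ q ∈ Q, r ≤ dist q z

/-- Separation of a point set: infimum of pairwise distances. -/
def sep (X : Set (Euc N)) : ℝ :=
  sInf {r | ∃ x ∈ X, ∃ y ∈ X, x ≠ y ∧ r = dist x y}

/-- A relation is a multiplicative `M`-distortion. -/
def MulDistortion (R : Set (Euc N × Euc N)) (M : ℝ) : Prop :=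
  ∀ p ∈ R, ∀ q ∈ R,
    (1 / (1 + M)) * dist p.1 q.1 ≤ dist p.2 q.2 ∧ dist p.2 q.2 ≤ (1 + M) * dist p.1 q.1

/-- A relation is an additive `A`-distortion. -/
def AddDistortion (R : Set (Euc N × Euc N)) (A : ℝ) : Prop :=
  ∀ p ∈ R, ∀ q ∈ R, |dist p.2 q.2 - dist p.1 q.1| ≤ A

/-- A relation is one-to-one: injective and functional. -/
def OneToOneRel (R : Set (Euc N × Euc N)) : Prop :=
  (∀ p ∈ R, ∀ q ∈ R, p.2 = q.2 → p.1 = q.1) ∧ (∀ p ∈ R, ∀ q ∈ R, p.1 = q.1 → p.2 = q.2)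

/-- `M` is a `C²` `d`-dimensional submanifold of `ℝᴺ` with tangent spaces given by `T`. -/
def IsC2Submanifold (d : ℕ) (M : Set (Euc N)) (T : Euc N → Submodule ℝ (Euc N)) : Prop :=
  ∀ m ∈ M, ∃ (φ : EuclideanSpace ℝ (Fin d) → Euc N) (U : Set (Euc N)),
    IsOpen U ∧ m ∈ U ∧ ContDiff ℝ 2 φ ∧ Function.Injective φ ∧
    (∀ x, Function.Injective (fderiv ℝ φ x)) ∧
    Set.range φ = M ∩ U ∧
    ∀ x, T (φ x) = LinearMap.range ((fderiv ℝ φ x).toLinearMap)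

/-- The family of affine spaces associated to a simplex `σ`: the affine hull of `σ`
together with the tangent spaces at projections of points of `Conv σ` onto `M`. -/
def stdFamily (σ : Finset (Euc N)) (T : Euc N → Submodule ℝ (Euc N)) (πM : Euc N → Euc N) :
    Set (AffineSubspace ℝ (Euc N)) :=
  insert (affineSpan ℝ (σ : Set (Euc N)))
    ((fun x => AffineSubspace.mk' (πM x) (T (πM x))) '' convexHull ℝ (σ : Set (Euc N)))

end


open InnerProductGeometry in
lemma key_norm {N : ℕ} (V₀ V₁ : Submodule ℝ (Euc N)) {θ : ℝ} (hθπ : θ < Real.pi)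
    (hang : subAngle V₀ V₁ ≤ θ)
    (hV₁ : ∃ u : Euc N, u ∈ V₁ ∧ ‖u‖ = 1)
    {v : Euc N} (hv : v ∈ V₀) :
    Real.cos θ * ‖v‖ ≤ ‖(V₁.orthogonalProjection v : Euc N)‖ := by
  rcases eq_or_ne v 0 with rfl | hv0
  · simp
  · have hvpos : (0:ℝ) < ‖v‖ := norm_pos_iff.2 hv0
    set w := ‖v‖⁻¹ • v with hw
    have hw1 : ‖w‖ = 1 := by
      rw [hw, norm_smul, norm_inv, norm_norm, inv_mul_cancel₀ hvpos.ne']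
    have hwV : w ∈ V₀ := V₀.smul_mem _ hv
    set B : Set ℝ := {b | ∃ v₁ ∈ V₁, ‖v₁‖ = 1 ∧ b = angle w v₁} with hB
    obtain ⟨u, huV, hu1⟩ := hV₁
    have hBne : B.Nonempty := ⟨angle w u, u, huV, hu1, rfl⟩
    have hBbd : BddBelow B := ⟨0, by rintro b ⟨v₁, _, _, rfl⟩; exact angle_nonneg _ _⟩
    have houtbd : BddAbove {a | ∃ v₀ ∈ V₀, ‖v₀‖ = 1 ∧
        a = sInf {b | ∃ v₁ ∈ V₁, ‖v₁‖ = 1 ∧ b = angle v₀ v₁}} := by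
      refine ⟨Real.pi, ?_⟩
      rintro a ⟨v₀, -, -, rfl⟩
      refine le_trans (csInf_le ⟨0, ?_⟩ ⟨u, huV, hu1, rfl⟩) (angle_le_pi _ _)
      rintro b ⟨v₁, -, -, rfl⟩; exact angle_nonneg _ _
    have ha : sInf B ≤ θ := le_trans (le_csSup houtbd ⟨w, hwV, hw1, rfl⟩) hang
    have main : Real.cos θ ≤ ‖(V₁.orthogonalProjection w : Euc N)‖ := by
      have htend : Filter.Tendsto Real.cos (nhdsWithin θ (Set.Ioi θ)) (nhds (Real.cos θ)) :=
        Real.continuous_cos.continuousWithinAt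
      refine le_of_tendsto htend ?_
      filter_upwards [Ioo_mem_nhdsGT_of_mem (⟨le_rfl, hθπ⟩ : θ ∈ Set.Ico θ Real.pi)] with β hβ
      obtain ⟨b, hbB, hbβ⟩ := exists_lt_of_csInf_lt hBne (lt_of_le_of_lt ha hβ.1)
      obtain ⟨v₁, hv₁V, hv₁1, rfl⟩ := hbB
      have hcos : Real.cos β ≤ Real.cos (angle w v₁) :=
        Real.cos_le_cos_of_nonneg_of_le_pi (angle_nonneg _ _) hβ.2.le hbβ.le
      rw [cos_angle, hw1, hv₁1, mul_one, div_one] at hcos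
      have hsplit : inner ℝ w v₁ = (inner ℝ ((V₁.orthogonalProjection w : Euc N)) v₁ : ℝ) := by
        have h0 : inner ℝ (w - (V₁.orthogonalProjection w : Euc N)) v₁ = 0 :=
          Submodule.starProjection_inner_eq_zero w v₁ hv₁V
        rw [inner_sub_left] at h0; linarith
      calc Real.cos β ≤ (inner ℝ w v₁ : ℝ) := hcos
        _ = inner ℝ ((V₁.orthogonalProjection w : Euc N)) v₁ := hsplit
        _ ≤ ‖(V₁.orthogonalProjection w : Euc N)‖ * ‖v₁‖ := real_inner_le_norm _ _
        _ = ‖(V₁.orthogonalProjection w : Euc N)‖ := by rw [hv₁1, mul_one]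
    have hPw : (V₁.orthogonalProjection w : Euc N)
        = ‖v‖⁻¹ • (V₁.orthogonalProjection v : Euc N) := by
      rw [hw, map_smul]; rfl
    rw [hPw, norm_smul, norm_inv, norm_norm] at main
    rw [mul_comm]
    calc ‖v‖ * Real.cos θ ≤ ‖v‖ * (‖v‖⁻¹ * ‖(V₁.orthogonalProjection v : Euc N)‖) :=
      mul_le_mul_of_nonneg_left main hvpos.le
    _ = ‖(V₁.orthogonalProjection v : Euc N)‖ := by field_simp

lemma exists_unit_vec {N : ℕ} {V : Submodule ℝ (Euc N)} (h : 0 < Module.finrank ℝ V) :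
    ∃ u : Euc N, u ∈ V ∧ ‖u‖ = 1 := by
  obtain ⟨⟨x, hxV⟩, hx0⟩ := Module.finrank_pos_iff_exists_ne_zero.mp h
  have hx0' : x ≠ 0 := fun h' => hx0 (by simp [h'])
  refine ⟨‖x‖⁻¹ • x, V.smul_mem _ hxV, ?_⟩
  rw [norm_smul, norm_inv, norm_norm, inv_mul_cancel₀ (norm_ne_zero_iff.2 hx0')]

open InnerProductGeometry in
lemma subAngle_nonneg' {N : ℕ} (V₀ V₁ : Submodule ℝ (Euc N))
    (h0 : ∃ w : Euc N, w ∈ V₀ ∧ ‖w‖ = 1) (h1 : ∃ u : Euc N, u ∈ V₁ ∧ ‖u‖ = 1) :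
    0 ≤ subAngle V₀ V₁ := by
  obtain ⟨w, hwV, hw1⟩ := h0
  obtain ⟨u, huV, hu1⟩ := h1
  have houtbd : BddAbove {a | ∃ v₀ ∈ V₀, ‖v₀‖ = 1 ∧
      a = sInf {b | ∃ v₁ ∈ V₁, ‖v₁‖ = 1 ∧ b = angle v₀ v₁}} := by
    refine ⟨Real.pi, ?_⟩
    rintro a ⟨v₀, -, -, rfl⟩
    refine le_trans (csInf_le ⟨0, ?_⟩ ⟨u, huV, hu1, rfl⟩) (angle_le_pi _ _)
    rintro b ⟨v₁, -, -, rfl⟩; exact angle_nonneg _ _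
  refine le_trans ?_ (le_csSup houtbd ⟨w, hwV, hw1, rfl⟩)
  refine le_csInf ⟨angle w u, u, huV, hu1, rfl⟩ ?_
  rintro b ⟨v₁, -, -, rfl⟩; exact angle_nonneg _ _


theorem height_under_projection (N d : ℕ) (σ : Finset (Euc N)) (hσ : Nondegenerate σ)
    (hcard : σ.card = d + 1) (H : AffineSubspace ℝ (Euc N))
    (hne : (H : Set (Euc N)).Nonempty) (hd : Module.finrank ℝ H.direction = d)
    (θ : ℝ) (hθ : θ < Real.pi / 2)
    (hang : affAngle (affineSpan ℝ (σ : Set (Euc N))) H ≤ θ) :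
    Nondegenerate (σ.image (projA H)) ∧ (σ.image (projA H)).card = d + 1 ∧
      Real.cos θ * height σ ≤ height (σ.image (projA H)) := by
  classical
  have hσne : σ.Nonempty := Finset.card_pos.mp (by omega)
  rcases Nat.eq_zero_or_pos d with rfl | hd1
  · -- degenerate case d = 0
    obtain ⟨v, rfl⟩ := Finset.card_eq_one.mp hcard
    refine ⟨?_, by simp, ?_⟩
    · rw [Nondegenerate, Finset.image_singleton]
      have : Subsingleton {x // x ∈ ({projA H v} : Finset (Euc N))} :=
        ⟨fun a b => Subtype.ext (by
          rw [Finset.mem_singleton.mp a.2, Finset.mem_singleton.mp b.2])⟩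
      exact affineIndependent_of_subsingleton ℝ _
    · have hh : ∀ w : Euc N, height ({w} : Finset (Euc N)) = 0 := by
        intro w
        rw [height, Finset.coe_singleton, Set.image_singleton, Finset.erase_singleton]
        rw [Finset.coe_empty, AffineSubspace.span_empty, AffineSubspace.bot_coe,
          Metric.infDist_empty, csInf_singleton]
      rw [Finset.image_singleton, hh, hh, mul_zero]
  · -- main case d ≥ 1
    set c : Euc N := hne.choose with hc
    set L : Euc N →ₗ[ℝ] Euc N :=
      H.direction.subtype.comp H.direction.orthogonalProjection.toLinearMap with hL
    set f : Euc N →ᵃ[ℝ] Euc N :=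
      { toFun := fun x => c + L (x - c)
        linear := L
        map_vadd' := by
          intro p v
          simp only [vadd_eq_add, map_add, map_sub]
          abel } with hf
    have hπf : projA H = ⇑f := by
      funext x
      rw [projA, dif_pos hne]
      rfl
    rw [hπf]
    have hfsub : ∀ x y : Euc N, f x - f y = L (x - y) := by
      intro x y
      show c + L (x - c) - (c + L (y - c)) = L (x - y)
      simp only [map_sub]
      abel
    have hLnorm : ∀ z : Euc N, ‖L z‖ = ‖(H.direction.orthogonalProjection z : Euc N)‖ :=
      fun z => rfl
    have hθπ : θ < Real.pi := lt_of_lt_of_le hθ (by linarith [Real.pi_pos])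
    have hV₁ : ∃ u : Euc N, u ∈ H.direction ∧ ‖u‖ = 1 :=
      exists_unit_vec (by rw [hd]; exact hd1)
    set V₀ : Submodule ℝ (Euc N) := (affineSpan ℝ (σ : Set (Euc N))).direction with hV₀
    have hangle : subAngle V₀ H.direction ≤ θ := hang
    have hkeyL : ∀ z : Euc N, z ∈ V₀ → Real.cos θ * ‖z‖ ≤ ‖L z‖ := by
      intro z hz
      rw [hLnorm]
      exact key_norm V₀ H.direction hθπ hangle hV₁ hz
    have hfinrankV₀ : Module.finrank ℝ V₀ = d := by
      rw [hV₀, direction_affineSpan]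
      have := hσ.finrank_vectorSpan (by rw [Fintype.card_coe]; exact hcard)
      rwa [Subtype.range_coe_subtype, Finset.setOf_mem] at this
    have hθ0 : 0 ≤ θ := by
      refine le_trans (subAngle_nonneg' V₀ H.direction
        (exists_unit_vec (by rw [hfinrankV₀]; exact hd1)) hV₁) hangle
    have hcosθ : 0 < Real.cos θ := Real.cos_pos_of_mem_Ioo ⟨by linarith [Real.pi_pos], hθ⟩
    have hkey : ∀ x ∈ affineSpan ℝ (σ : Set (Euc N)), ∀ y ∈ affineSpan ℝ (σ : Set (Euc N)),
        Real.cos θ * dist x y ≤ dist (f x) (f y) := by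
      intro x hx y hy
      rw [dist_eq_norm, dist_eq_norm, hfsub]
      have hxy : x - y ∈ V₀ := by
        have := AffineSubspace.vsub_mem_direction hx hy
        rwa [vsub_eq_sub] at this
      exact hkeyL _ hxy
    have hfinj : ∀ x ∈ affineSpan ℝ (σ : Set (Euc N)), ∀ y ∈ affineSpan ℝ (σ : Set (Euc N)),
        f x = f y → x = y := by
      intro x hx y hy hxy
      have h1 := hkey x hx y hy
      rw [hxy, dist_self] at h1
      have h2 : dist x y ≤ 0 := by nlinarith [dist_nonneg (x := x) (y := y)]
      exact dist_le_zero.mp h2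
    have hmemspan : ∀ x ∈ σ, x ∈ affineSpan ℝ (σ : Set (Euc N)) := fun x hx =>
      subset_affineSpan ℝ _ (Finset.mem_coe.mpr hx)
    have hinjOn : Set.InjOn f σ := fun x hx y hy h =>
      hfinj x (hmemspan x hx) y (hmemspan y hy) h
    have hcardim : (σ.image ⇑f).card = d + 1 := by
      rw [Finset.card_image_of_injOn hinjOn, hcard]
    refine ⟨?_, hcardim, ?_⟩
    · -- nondegeneracy
      set g : {x // x ∈ σ} → {x // x ∈ σ.image ⇑f} :=
        fun s => ⟨f s, Finset.mem_image_of_mem _ s.2⟩ with hg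
      have hgbij : Function.Bijective g := by
        constructor
        · intro a b hab
          exact Subtype.ext (hinjOn a.2 b.2 (congrArg Subtype.val hab))
        · rintro ⟨q, hq⟩
          obtain ⟨s, hs, rfl⟩ := Finset.mem_image.mp hq
          exact ⟨⟨s, hs⟩, rfl⟩
      rw [Nondegenerate, ← affineIndependent_equiv (Equiv.ofBijective g hgbij)]
      have hcomp : (fun p : {x // x ∈ σ.image ⇑f} => (p : Euc N)) ∘ Equiv.ofBijective g hgbij
          = ⇑f ∘ (fun p : {x // x ∈ σ} => (p : Euc N)) := rfl
      rw [hcomp]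
      set i₁ : {x // x ∈ σ} := ⟨hσne.choose, hσne.choose_spec⟩ with hi₁
      rw [affineIndependent_iff_linearIndependent_vsub ℝ _ i₁]
      have hli := (affineIndependent_iff_linearIndependent_vsub ℝ
        (fun p : {x // x ∈ σ} => (p : Euc N)) i₁).mp hσ
      have hfe : (fun j : {j : {x // x ∈ σ} // j ≠ i₁} =>
            (⇑f ∘ fun p : {x // x ∈ σ} => (p : Euc N)) ↑j -ᵥ
            (⇑f ∘ fun p : {x // x ∈ σ} => (p : Euc N)) ↑i₁)
          = ⇑L ∘ (fun j : {j : {x // x ∈ σ} // j ≠ i₁} =>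
            ((j : {x // x ∈ σ}) : Euc N) -ᵥ (i₁ : Euc N)) := by
        funext j
        show f _ -ᵥ f _ = L (_ -ᵥ _)
        rw [vsub_eq_sub, vsub_eq_sub, hfsub]
      rw [hfe]
      refine hli.map ?_
      rw [Submodule.disjoint_def]
      intro x hxspan hxker
      have hxV₀ : x ∈ V₀ := by
        refine Submodule.span_le.mpr ?_ hxspan
        rintro z ⟨j, rfl⟩
        have := AffineSubspace.vsub_mem_direction
          (hmemspan _ (j : {x // x ∈ σ}).2) (hmemspan _ i₁.2)
        exact this
      have hLx : L x = 0 := LinearMap.mem_ker.mp hxker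
      have := hkeyL x hxV₀
      rw [hLx, norm_zero] at this
      have hxnorm : ‖x‖ ≤ 0 := by
        have h0 : Real.cos θ * ‖x‖ ≤ Real.cos θ * 0 := by rwa [mul_zero]
        exact le_of_mul_le_mul_left h0 hcosθ
      exact norm_le_zero_iff.mp hxnorm
    · -- height bound
      have hbddσ : BddBelow ((fun v => Metric.infDist v
          (affineSpan ℝ ((σ.erase v : Finset (Euc N)) : Set (Euc N)))) '' σ) :=
        (σ.finite_toSet.image _).bddBelow
      have hhσ : ∀ v ∈ σ, height σ ≤ Metric.infDist v
          (affineSpan ℝ ((σ.erase v : Finset (Euc N)) : Set (Euc N))) := fun v hv =>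
        csInf_le hbddσ (Set.mem_image_of_mem _ (Finset.mem_coe.mpr hv))
      refine le_csInf ?_ ?_
      · refine Set.Nonempty.image _ ?_
        obtain ⟨v, hv⟩ := hσne
        exact ⟨f v, Finset.mem_coe.mpr (Finset.mem_image_of_mem _ hv)⟩
      · rintro y ⟨w, hw, rfl⟩
        obtain ⟨v, hv, rfl⟩ := Finset.mem_image.mp (Finset.mem_coe.mp hw)
        dsimp only
        -- identify the erased image
        have hsetA : ((σ.image ⇑f).erase (f v)) = (σ.erase v).image ⇑f := by
          ext x
          simp only [Finset.mem_erase, Finset.mem_image]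
          constructor
          · rintro ⟨hxne, u, hu, rfl⟩
            exact ⟨u, ⟨fun h => hxne (congrArg f h), hu⟩, rfl⟩
          · rintro ⟨u, ⟨huv, hu⟩, rfl⟩
            exact ⟨fun h => huv (hinjOn hu hv h), u, hu, rfl⟩
        have herasene : (σ.erase v).Nonempty := by
          rw [← Finset.card_pos, Finset.card_erase_of_mem hv, hcard]; omega
        have hAne : ((affineSpan ℝ ((σ.erase v : Finset (Euc N)) : Set (Euc N))) :
            Set (Euc N)).Nonempty := by
          rw [affineSpan_nonempty]
          obtain ⟨u, hu⟩ := herasene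
          exact ⟨u, Finset.mem_coe.mpr hu⟩
        rw [hsetA, Finset.coe_image, ← AffineSubspace.map_span, AffineSubspace.coe_map]
        by_contra hlt
        push_neg at hlt
        obtain ⟨z, hz, hzlt⟩ := (Metric.infDist_lt_iff (hAne.image f)).mp hlt
        obtain ⟨y, hyA, rfl⟩ := hz
        have hy' : y ∈ affineSpan ℝ (σ : Set (Euc N)) := by
          have hsub : affineSpan ℝ ((σ.erase v : Finset (Euc N)) : Set (Euc N))
              ≤ affineSpan ℝ (σ : Set (Euc N)) :=
            affineSpan_mono ℝ (by exact_mod_cast Finset.erase_subset v σ)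
          exact hsub hyA
        have hchain : Real.cos θ * height σ ≤ dist (f v) (f y) := by
          calc Real.cos θ * height σ
              ≤ Real.cos θ * Metric.infDist v
                (affineSpan ℝ ((σ.erase v : Finset (Euc N)) : Set (Euc N))) :=
                mul_le_mul_of_nonneg_left (hhσ v hv) hcosθ.le
            _ ≤ Real.cos θ * dist v y :=
                mul_le_mul_of_nonneg_left (Metric.infDist_le_dist_of_mem hyA) hcosθ.le
            _ ≤ dist (f v) (f y) := hkey v (hmemspan v hv) y hy'
        linarith
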